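/- Let (πₖ)ₖ be a sequence in [π_min, π_max] with π_min > 0 and πₖ₊₁ ≤ 1 + πₖ for all k. Let ρ₀ > 0 and suppose (ρₖ) satisfies ρₖ₊₁² ≥ (1 + πₖρₖ)/πₖ₊₁ − εₖ₊₁ for all k, where εₖ ≥ 0 and εₖ → 0. Then liminf_{k→∞} ρₖ > 1. -/

import Mathlib

open Filter Topology

/-- Helper: if `x ≤ ρ²`, `x ≤ 1`, `0 < ρ`, then `x ≤ ρ`. -/
lemma stmt9_aux_sq {x r : ℝ} (hr : 0 < r) (hx : x ≤ 1) (h : x ≤ r ^ 2) : x ≤ r := by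
  rcases le_or_gt x r with h' | h'
  · exact h'
  · nlinarith

/-- Helper: if `(1+a)² ≤ ρ²` with `0 ≤ a`, `0 < ρ`, then `1 + a ≤ ρ`. -/
lemma stmt9_aux_sq' {a r : ℝ} (hr : 0 < r) (ha : 0 ≤ a) (h : (1 + a) ^ 2 ≤ r ^ 2) :
    1 + a ≤ r := by nlinarith

set_option maxHeartbeats 4000000 in
/-- If `(πₖ) ⊂ [π_min, π_max]` with `π_min > 0` and `πₖ₊₁ ≤ 1 + πₖ`, and a positive sequence
`(ρₖ)` satisfies `ρₖ₊₁² ≥ (1 + πₖρₖ)/πₖ₊₁ − εₖ₊₁` with `εₖ ≥ 0`, `εₖ → 0`, then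
`liminf ρₖ > 1`, i.e. eventually `ρₖ ≥ 1 + δ` for some `δ > 0`. -/
theorem stmt9 (π ρ ε : ℕ → ℝ) (πmin πmax : ℝ) (hπmin : 0 < πmin)
    (hπ : ∀ k, π k ∈ Set.Icc πmin πmax) (hπgrow : ∀ k, π (k + 1) ≤ 1 + π k)
    (hρpos : ∀ k, 0 < ρ k)
    (hε : ∀ k, 0 ≤ ε k) (hεlim : Tendsto ε atTop (𝓝 0))
    (hrec : ∀ k, (ρ (k + 1)) ^ 2 ≥ (1 + π k * ρ k) / π (k + 1) - ε (k + 1)) :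
    ∃ δ > 0, ∀ᶠ k in atTop, 1 + δ ≤ ρ k := by
  obtain ⟨P, hPdef⟩ : ∃ x : ℝ, x = πmax := ⟨_, rfl⟩
  obtain ⟨p, hpdef⟩ : ∃ x : ℝ, x = πmin := ⟨_, rfl⟩
  have hppos : 0 < p := hpdef ▸ hπmin
  have hπ' : ∀ k, p ≤ π k ∧ π k ≤ P := by
    intro k; rw [hpdef, hPdef]; exact ⟨(hπ k).1, (hπ k).2⟩
  have hpP : p ≤ P := le_trans (hπ' 0).1 (hπ' 0).2
  have hPpos : 0 < P := lt_of_lt_of_le hppos hpP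
  have hπpos : ∀ k, 0 < π k := fun k => lt_of_lt_of_le hppos (hπ' k).1
  -- constants
  obtain ⟨δ₁, hδ₁def⟩ : ∃ x : ℝ, x = min (1/8) (1/(24*(P+1))) := ⟨_, rfl⟩
  have hδ₁pos : 0 < δ₁ := by rw [hδ₁def]; exact lt_min (by norm_num) (by positivity)
  have hδ₁8 : δ₁ ≤ 1/8 := hδ₁def ▸ min_le_left _ _
  have hδ₁P : δ₁ * (24*(P+1)) ≤ 1 := by
    have h1 : δ₁ ≤ 1/(24*(P+1)) := hδ₁def ▸ min_le_right _ _
    rw [le_div_iff₀ (by positivity)] at h1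
    linarith
  obtain ⟨c, hcdef⟩ : ∃ x : ℝ, x = p/(1+p) := ⟨_, rfl⟩
  have hc0 : 0 < c := hcdef ▸ div_pos hppos (by linarith)
  have hc1 : c < 1 := hcdef ▸ (div_lt_one (by linarith)).2 (by linarith)
  have hcp : c * (1+p) = p := by rw [hcdef]; field_simp
  obtain ⟨q, hqdef⟩ : ∃ x : ℝ, x = c/6 := ⟨_, rfl⟩
  have hq0 : 0 < q := by rw [hqdef]; positivity
  have hq1 : q < 1 := by rw [hqdef]; linarith
  obtain ⟨N, hNdef⟩ : ∃ n : ℕ, n = ⌈6*P⌉₊ + 1 := ⟨_, rfl⟩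
  have hN6P : 6*P ≤ (N:ℝ) := by
    rw [hNdef]; push_cast
    have := Nat.le_ceil (6*P)
    linarith
  obtain ⟨δ, hδdef⟩ : ∃ x : ℝ, x = q^N * δ₁ := ⟨_, rfl⟩
  have hδpos : 0 < δ := by rw [hδdef]; positivity
  obtain ⟨g, hgdef⟩ : ∃ x : ℝ, x = δ₁/(2*(1+P)) := ⟨_, rfl⟩
  have hgpos : 0 < g := by rw [hgdef]; positivity
  obtain ⟨ε₀, hε₀def⟩ : ∃ x : ℝ, x = min g (c*δ/2) := ⟨_, rfl⟩
  have hε₀pos : 0 < ε₀ := by rw [hε₀def]; exact lt_min hgpos (by positivity)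
  have hε₀g : ε₀ ≤ g := hε₀def ▸ min_le_left _ _
  have hε₀cδ : ε₀ ≤ c*δ/2 := hε₀def ▸ min_le_right _ _
  have hgP : g * (2*(1+P)) = δ₁ := by rw [hgdef]; field_simp
  have hε₀P : ε₀ ≤ 1/(2*P) := by
    have h1 : g ≤ 1/(2*P) := by
      rw [le_div_iff₀ (by positivity)]
      linarith only [hgP, hδ₁8, hgpos]
    linarith only [h1, hε₀g]
  -- K₀ : beyond it, ε ≤ ε₀
  obtain ⟨K₀, hK₀⟩ := (hεlim.eventually_lt_const hε₀pos).exists_forall_of_atTop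
  replace hK₀ : ∀ k, K₀ ≤ k → ε k ≤ ε₀ := fun k hk => (hK₀ k hk).le
  -- product form of the recursion
  have h1 : ∀ k, 1 + π k * ρ k ≤ π (k+1) * ρ (k+1)^2 + π (k+1) * ε (k+1) := by
    intro k
    have hπk1 := hπpos (k+1)
    have h := hrec k
    rw [ge_iff_le, sub_le_iff_le_add, div_le_iff₀ hπk1] at h
    linarith only [h]
  -- one-step lower bound with a comparison value r ≤ ρ k
  have hstep : ∀ k r, r ≤ ρ k →
      (1 + π k * r)/(1 + π k) - ε (k+1) ≤ ρ (k+1)^2 := by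
    intro k r hr
    have hπk := hπpos k
    have hπk1 := hπpos (k+1)
    have h2 : (1 + π k * r)/(1 + π k) ≤ (1 + π k * ρ k)/(π (k+1)) := by
      apply div_le_div₀ (by linarith only [mul_pos hπk (hρpos k)])
        (by linarith only [mul_le_mul_of_nonneg_left hr hπk.le]) hπk1 (hπgrow k)
    have h3 := hrec k
    linarith
  -- Stage A preliminaries
  obtain ⟨β, hβdef⟩ : ∃ x : ℝ, x = 1/(2*(1+P)) := ⟨_, rfl⟩
  have hβpos : 0 < β := by rw [hβdef]; positivity
  have hβ1 : β ≤ 1 := by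
    rw [hβdef]
    rw [div_le_one (by positivity)]
    linarith
  have hβP : β * (2*(1+P)) = 1 := by rw [hβdef]; field_simp
  -- Stage A one step
  have hAstep : ∀ k, K₀ ≤ k → ∀ r, r ≤ 1 - δ₁ → r ≤ ρ k →
      min (1-δ₁) (r + g) ≤ ρ (k+1) := by
    intro k hk r hr1 hr2
    have hπk := hπpos k
    have hπkP := (hπ' k).2
    have h2 := hstep k r hr2
    have e1 : (1 + π k * r)/(1 + π k) = r + (1-r)/(1 + π k) := by
      field_simp; ring
    have e2 : (1-r)/(1+P) ≤ (1-r)/(1 + π k) := by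
      apply div_le_div_of_nonneg_left (by linarith) (by linarith) (by linarith)
    have e3 : 2*g ≤ (1-r)/(1+P) := by
      rw [le_div_iff₀ (by positivity)]
      linarith only [hgP, hr1]
    have hε1 : ε (k+1) ≤ ε₀ := hK₀ (k+1) (by omega)
    have h4 : r + g ≤ ρ (k+1)^2 := by
      rw [e1] at h2; linarith
    rcases le_or_gt (r + g) 1 with h5 | h5
    · calc min (1-δ₁) (r+g) ≤ r + g := min_le_right _ _
        _ ≤ ρ (k+1) := stmt9_aux_sq (hρpos (k+1)) h5 h4
    · have h6 : 1 < ρ (k+1) := by nlinarith only [h4, h5, hρpos (k+1)]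
      calc min (1-δ₁) (r+g) ≤ 1-δ₁ := min_le_left _ _
        _ ≤ ρ (k+1) := by linarith
  -- Stage A induction
  have hAn : ∀ n : ℕ, min (1-δ₁) (β + n*g) ≤ ρ (K₀+1+n) := by
    intro n
    induction n with
    | zero =>
      have h2 := hstep K₀ 0 (hρpos K₀).le
      have e1 : (1 + π K₀ * 0)/(1 + π K₀) = 1/(1 + π K₀) := by rw [mul_zero, add_zero]
      have e2 : 2*β ≤ 1/(1 + π K₀) := by
        rw [le_div_iff₀ (by linarith [hπpos K₀])]
        linarith only [mul_le_mul_of_nonneg_left (hπ' K₀).2 hβpos.le, hβP]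
      have hε1 : ε (K₀+1) ≤ ε₀ := hK₀ (K₀+1) (by omega)
      have hε2 : ε₀ ≤ β := by
        have hgβ : g ≤ β := by nlinarith only [hgP, hβP, hδ₁8, hPpos]
        linarith
      have h4 : β ≤ ρ (K₀+1)^2 := by
        rw [e1] at h2; linarith
      have h5 : β ≤ ρ (K₀+1) := stmt9_aux_sq (hρpos _) hβ1 h4
      calc min (1-δ₁) (β + (0:ℕ)*g) ≤ β + (0:ℕ)*g := min_le_right _ _
        _ = β := by push_cast; ring
        _ ≤ ρ (K₀+1) := by linarith
    | succ n ih =>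
      have hr1 : min (1-δ₁) (β + n*g) ≤ 1 - δ₁ := min_le_left _ _
      have h := hAstep (K₀+1+n) (by omega) _ hr1 ih
      have heq : K₀+1+n+1 = K₀+1+(n+1) := by omega
      rw [heq] at h
      refine le_trans ?_ h
      rcases le_total (1-δ₁) (β + n*g) with h5 | h5
      · rw [min_eq_left h5]
        refine le_min (min_le_left _ _) ?_
        have := min_le_left (1-δ₁) (β + ((n:ℝ)+1)*g)
        push_cast
        linarith [min_le_left (1-δ₁) (β + (((n:ℕ):ℝ)+1)*g)]
      · rw [min_eq_right h5]
        apply min_le_min le_rfl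
        push_cast; linarith
  -- Stage A conclusion
  obtain ⟨M, hMdef⟩ : ∃ n : ℕ, n = ⌈2*(1+P)/δ₁⌉₊ := ⟨_, rfl⟩
  obtain ⟨K₁, hK₁def⟩ : ∃ n : ℕ, n = K₀ + 1 + M := ⟨_, rfl⟩
  have hA : ∀ k, K₁ ≤ k → 1 - δ₁ ≤ ρ k := by
    intro k hk
    have hn : k = K₀ + 1 + (k - (K₀+1)) := by omega
    obtain ⟨n, hndef⟩ : ∃ n : ℕ, n = k - (K₀+1) := ⟨_, rfl⟩
    have hnM : M ≤ n := by omega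
    have hnMr : (M:ℝ) ≤ (n:ℝ) := by exact_mod_cast hnM
    have hMg : 1 ≤ (M:ℝ) * g := by
      have h6 : 2*(1+P)/δ₁ ≤ (M:ℝ) := by rw [hMdef]; exact Nat.le_ceil _
      rw [div_le_iff₀ hδ₁pos] at h6
      have h7 : (M:ℝ)*δ₁ = ((M:ℝ)*g)*(2*(1+P)) := by rw [← hgP]; ring
      have h8 : 1*(2*(1+P)) ≤ ((M:ℝ)*g)*(2*(1+P)) := by
        rw [← h7]; linarith only [h6]
      exact le_of_mul_le_mul_right h8 (by positivity)
    have h7 : 1 - δ₁ ≤ β + n*g := by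
      have h8 : (M:ℝ)*g ≤ (n:ℝ)*g := mul_le_mul_of_nonneg_right hnMr hgpos.le
      linarith only [hMg, h8, hβpos, hδ₁pos]
    have h9 := hAn n
    rw [min_eq_left (by linarith)] at h9
    rw [hn, ← hndef]
    exact h9
  -- Stage C : slow decay
  have hC : ∀ k, K₀ ≤ k → ∀ d, δ ≤ d → d ≤ δ₁ → 1 + d ≤ ρ k → 1 + q*d ≤ ρ (k+1) := by
    intro k hk d hdδ hdδ₁ hd
    have hd0 : 0 < d := lt_of_lt_of_le hδpos hdδ
    have hπk := hπpos k
    have hπkp := (hπ' k).1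
    have h2 := hstep k (1+d) hd
    have h3 : 1 + c*d ≤ (1 + π k * (1+d))/(1 + π k) := by
      rw [le_div_iff₀ (by linarith)]
      have key : p * (1 + π k) ≤ π k * (1+p) := by linarith only [hπkp]
      have A := mul_le_mul_of_nonneg_right key hd0.le
      have hB : ((1 + c*d)*(1+π k))*(1+p) = (1+p)*(1+π k) + (p*(1+π k))*d := by
        calc ((1 + c*d)*(1+π k))*(1+p)
            = (1+π k)*(1+p) + (c*(1+p))*(d*(1+π k)) := by ring
          _ = (1+p)*(1+π k) + (p*(1+π k))*d := by rw [hcp]; ring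
      have h9 : ((1 + c*d)*(1+π k))*(1+p) ≤ (1 + π k*(1+d))*(1+p) := by
        rw [hB]; linarith only [A]
      exact le_of_mul_le_mul_right h9 (by linarith only [hppos])
    have hε1 : ε (k+1) ≤ ε₀ := hK₀ (k+1) (by omega)
    have h4 : 1 + 3*(q*d) ≤ ρ (k+1)^2 := by
      have hcq : c = 6*q := by rw [hqdef]; ring
      have h5 : ε₀ ≤ 3*(q*d) := by
        have h6 : c*δ/2 ≤ 3*(q*d) := by
          rw [hcq]
          linarith only [mul_le_mul_of_nonneg_left hdδ hq0.le]
        linarith only [h6, hε₀cδ]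
      have hcd : c*d = 6*(q*d) := by rw [hcq]; ring
      linarith only [h2, h3, hε1, h5, hcd]
    have hqd1 : q*d ≤ 1 := by
      have h6 : q*d ≤ 1*δ₁ := mul_le_mul hq1.le hdδ₁ hd0.le (by norm_num)
      linarith only [h6, hδ₁8]
    apply stmt9_aux_sq' (hρpos _) (by positivity)
    nlinarith only [h4, hqd1, mul_nonneg hq0.le hd0.le]
  -- Stage B : ρ cannot stay ≤ 1+δ₁ for N consecutive steps
  have hB : ∀ k, K₁ ≤ k → ∃ j, 1 ≤ j ∧ j ≤ N ∧ 1 + δ₁ < ρ (k+j) := by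
    intro k hk
    by_contra hcon
    push_neg at hcon
    have hsmall : ∀ j, 1 ≤ j → j ≤ N → ρ (k+j) ≤ 1 + δ₁ := fun j h1j hjN => hcon j h1j hjN
    have hind : ∀ j, j ≤ N → π k + j/6 ≤ π (k+j) := by
      intro j hjN
      induction j with
      | zero => simp
      | succ n ih =>
        have ihn := ih (by omega)
        have hρn1 : ρ (k+n+1) ≤ 1 + δ₁ := by
          have h5 := hsmall (n+1) (by omega) hjN
          have heq : k + (n+1) = k + n + 1 := by omega
          rwa [heq] at h5
        have hρn : 1 - δ₁ ≤ ρ (k+n) := hA (k+n) (by omega)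
        have hprod := h1 (k+n)
        have hπ1 := hπpos (k+n+1)
        have hπ1P := (hπ' (k+n+1)).2
        have hπ0 := hπpos (k+n)
        have hπ0P := (hπ' (k+n)).2
        have hε1 : ε (k+n+1) ≤ ε₀ := hK₀ _ (by omega)
        have hεP : π (k+n+1) * ε (k+n+1) ≤ 1/2 := by
          have h5 : π (k+n+1) * ε (k+n+1) ≤ P * ε₀ :=
            mul_le_mul hπ1P hε1 (hε _) hPpos.le
          have h6 : P * ε₀ ≤ P * (1/(2*P)) := mul_le_mul_of_nonneg_left hε₀P hPpos.le
          have h7 : P * (1/(2*P)) = 1/2 := by field_simp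
          linarith
        have hρsq : ρ (k+n+1)^2 ≤ (1+δ₁)^2 := by
          nlinarith only [hρn1, hρpos (k+n+1), hδ₁pos]
        have hX : 1/2 + π (k+n) * (1-δ₁) ≤ π (k+n+1) * (1+δ₁)^2 := by
          have h5 : π (k+n) * (1-δ₁) ≤ π (k+n) * ρ (k+n) :=
            mul_le_mul_of_nonneg_left hρn hπ0.le
          have h6 : π (k+n+1) * ρ (k+n+1)^2 ≤ π (k+n+1) * (1+δ₁)^2 :=
            mul_le_mul_of_nonneg_left hρsq hπ1.le
          linarith
        have hdP : π (k+n) * δ₁ ≤ 1/24 := by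
          have h8 := mul_le_mul_of_nonneg_right hπ0P hδ₁pos.le
          linarith only [h8, hδ₁P, hδ₁pos]
        have hkey : π (k+n) + 1/6 ≤ π (k+n+1) := by
          have h9 : π (k+n) * δ₁ * δ₁ ≤ (1/24)*(1/8) :=
            mul_le_mul hdP hδ₁8 hδ₁pos.le (by norm_num)
          have h10 : δ₁ * δ₁ ≤ (1/8)*(1/8) :=
            mul_le_mul hδ₁8 hδ₁8 hδ₁pos.le (by norm_num)
          have step1 : (π (k+n) + 1/6)*(1+δ₁)^2 ≤ 1/2 + π (k+n)*(1-δ₁) := by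
            nlinarith only [hdP, h9, h10, hδ₁8, hδ₁pos]
          exact le_of_mul_le_mul_right (le_trans step1 hX) (by positivity)
        have heq : k + (n+1) = k + n + 1 := by omega
        rw [heq]
        push_cast
        linarith
    have hfin := hind N le_rfl
    have hNP := (hπ' (k+N)).2
    have hpk := (hπ' k).1
    linarith
  -- final assembly
  refine ⟨δ, hδpos, ?_⟩
  rw [eventually_atTop]
  refine ⟨K₁ + N + 1, ?_⟩
  intro k hk
  have hk₀ : K₁ ≤ k - (N+1) := by omega
  obtain ⟨k₀, hk₀def⟩ : ∃ n : ℕ, n = k - (N+1) := ⟨_, rfl⟩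
  have hkeq : k = k₀ + N + 1 := by omega
  obtain ⟨j, hj1, hjN, hρj⟩ := hB k₀ (by omega)
  obtain ⟨i, hidef⟩ : ∃ n : ℕ, n = k₀ + j := ⟨_, rfl⟩
  have hiK : K₀ ≤ i := by omega
  have hik : i ≤ k := by omega
  have hkiN : k - i ≤ N := by omega
  have hρi : 1 + δ₁ ≤ ρ i := by rw [hidef]; exact hρj.le
  -- iterate stage C
  have hiter : ∀ n, n ≤ N → 1 + q^n * δ₁ ≤ ρ (i + n) := by
    intro n hn
    induction n with
    | zero => simpa using hρi
    | succ m ih =>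
      have ihm := ih (by omega)
      have hqm0 : 0 < q^m := pow_pos hq0 m
      have hd1 : δ ≤ q^m * δ₁ := by
        rw [hδdef]
        exact mul_le_mul_of_nonneg_right
          (pow_le_pow_of_le_one hq0.le hq1.le (by omega)) hδ₁pos.le
      have hd2 : q^m * δ₁ ≤ δ₁ := by
        simpa using mul_le_mul_of_nonneg_right (pow_le_one₀ hq0.le hq1.le) hδ₁pos.le
      have h := hC (i+m) (by omega) (q^m * δ₁) hd1 hd2 ihm
      have heq : i + (m+1) = i + m + 1 := by omega
      rw [heq]
      calc 1 + q^(m+1) * δ₁ = 1 + q*(q^m * δ₁) := by ring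
        _ ≤ ρ (i+m+1) := h
  have hfin := hiter (k - i) hkiN
  have heq : i + (k - i) = k := by omega
  rw [heq] at hfin
  have hmono : q^N * δ₁ ≤ q^(k-i) * δ₁ :=
    mul_le_mul_of_nonneg_right (pow_le_pow_of_le_one hq0.le hq1.le hkiN) hδ₁pos.le
  rw [hδdef]
  linarith
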